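/- If h < 1/2, then the background h is robust for the splitting model on Z^d (d ≥ 1): for every initial mass n ≥ 0 and every valid splitting order, the configuration η_n^h stabilizes, i.e. every site splits only finitely many times. -/

import Mathlib

open scoped BigOperators

/-- The nearest neighbor of `x ∈ ℤ^d` obtained by shifting coordinate `i` by `ε`. -/
def nbr {d : ℕ} (x : Fin d → ℤ) (i : Fin d) (ε : ℤ) : Fin d → ℤ :=
  Function.update x i (x i + ε)

/-- Nearest-neighbor adjacency in `ℤ^d`. -/
def Adj {d : ℕ} (x y : Fin d → ℤ) : Prop :=
  (∑ i, |x i - y i|) = 1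

/-- The splitting model on `ℤ^d` with initial mass `n` at the origin and background
mass `h` at every other site, together with a splitting order: `S (t+1)` is the set
of sites that split at time `t+1` (a subset of the sites unstable at time `t`,
i.e. those of mass `≥ 1`), and the mass `η` evolves by Zhang's toppling rule:
a splitting site loses all its mass, distributing a fraction `1/(2d)` of it to
each of its `2d` nearest neighbors. -/
structure SplittingModel (d : ℕ) (n h : ℝ) where
  η : ℕ → (Fin d → ℤ) → ℝ
  S : ℕ → Set (Fin d → ℤ)
  init_origin : η 0 0 = n
  init_other : ∀ x : Fin d → ℤ, x ≠ 0 → η 0 x = h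
  S_zero : S 0 = ∅
  S_subset : ∀ t, S (t + 1) ⊆ {x | 1 ≤ η t x}
  evolve : ∀ t x, η (t + 1) x =
      (S (t + 1))ᶜ.indicator (η t) x
        + (1 / (2 * (d : ℝ))) * ∑ i : Fin d,
            ((S (t + 1)).indicator (η t) (nbr x i 1)
              + (S (t + 1)).indicator (η t) (nbr x i (-1)))

namespace SplittingModel

variable {d : ℕ} {n h : ℝ}

/-- A valid splitting order: some unstable site splits whenever there is an unstable
site, and every site that is unstable at some time eventually splits. -/
def Valid (M : SplittingModel d n h) : Prop :=
  (∀ t, {x | 1 ≤ M.η t x}.Nonempty → (M.S (t + 1)).Nonempty) ∧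
    (∀ t x, 1 ≤ M.η t x → ∃ t₀, 1 ≤ t₀ ∧ x ∈ M.S (t + t₀))

/-- The parallel splitting order (the splitting automaton): at every time step,
every unstable site splits. -/
def Parallel (M : SplittingModel d n h) : Prop :=
  ∀ t, M.S (t + 1) = {x | 1 ≤ M.η t x}

/-- The set of sites that split at least once up to (and including) time `t`. -/
def Tt (M : SplittingModel d n h) (t : ℕ) : Set (Fin d → ℤ) :=
  ⋃ t' ∈ Set.Icc 1 t, M.S t'

/-- The set of sites that split at least once. -/
def T (M : SplittingModel d n h) : Set (Fin d → ℤ) :=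
  ⋃ t, M.S t

/-- The model stabilizes: every site splits only finitely many times. -/
def Stabilizes (M : SplittingModel d n h) : Prop :=
  ∀ x, {t | x ∈ M.S t}.Finite

/-- The total mass `u x` emitted from the site `x` during stabilization. -/
noncomputable def emit (M : SplittingModel d n h) (x : Fin d → ℤ) : ℝ :=
  ∑' t : ℕ, (M.S (t + 1)).indicator (M.η t) x

end SplittingModel


open scoped Classical

namespace SplittingModel

variable {d : ℕ} {n h : ℝ}

/-! ### auxiliary development -/

/-- signed unit step -/
def dirz (b : Bool) : ℤ := if b then 1 else -1

/-- neighbor indexed by a direction `p : Fin d × Bool` -/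
def nb {d : ℕ} (x : Fin d → ℤ) (p : Fin d × Bool) : Fin d → ℤ := nbr x p.1 (dirz p.2)

/-- inverse direction -/
def pinv {d : ℕ} (p : Fin d × Bool) : Fin d × Bool := (p.1, !p.2)

lemma dirz_not (b : Bool) : dirz (!b) = - dirz b := by cases b <;> simp [dirz]

lemma pinv_pinv {d : ℕ} (p : Fin d × Bool) : pinv (pinv p) = p := by
  cases p with | mk i b => simp [pinv]

lemma nb_nb {d : ℕ} (x : Fin d → ℤ) (p : Fin d × Bool) : nb (nb x p) (pinv p) = x := by
  cases p with | mk i b =>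
  simp only [nb, pinv, nbr, dirz_not, Function.update_self, Function.update_idem]
  rw [add_neg_cancel_right, Function.update_eq_self]

lemma nb_nb' {d : ℕ} (x : Fin d → ℤ) (p : Fin d × Bool) : nb (nb x (pinv p)) p = x := by
  have := nb_nb x (pinv p)
  rwa [pinv_pinv] at this

lemma nb_inj {d : ℕ} (p : Fin d × Bool) :
    Function.Injective (fun x : Fin d → ℤ => nb x p) := by
  intro a b hab
  simp only at hab
  have : nb (nb a p) (pinv p) = nb (nb b p) (pinv p) := by rw [hab]
  rwa [nb_nb, nb_nb] at this

variable (M : SplittingModel d n h)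

lemma evolve' (t : ℕ) (x : Fin d → ℤ) :
    M.η (t + 1) x = (M.S (t + 1))ᶜ.indicator (M.η t) x
      + (1 / (2 * (d : ℝ))) * ∑ p : Fin d × Bool, (M.S (t + 1)).indicator (M.η t) (nb x p) := by
  rw [M.evolve t x]
  congr 2
  rw [Fintype.sum_prod_type]
  refine Finset.sum_congr rfl (fun i _ => ?_)
  rw [Fintype.sum_bool]
  simp [nb, dirz]

lemma ind_nonneg (t : ℕ) (z : Fin d → ℤ) : 0 ≤ (M.S (t + 1)).indicator (M.η t) z := by
  by_cases hz : z ∈ M.S (t + 1)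
  · rw [Set.indicator_of_mem hz]
    exact le_trans zero_le_one (M.S_subset t hz)
  · rw [Set.indicator_of_notMem hz]

lemma ind_one {t : ℕ} {z : Fin d → ℤ} (hz : z ∈ M.S (t + 1)) :
    1 ≤ (M.S (t + 1)).indicator (M.η t) z := by
  rw [Set.indicator_of_mem hz]; exact M.S_subset t hz

lemma eta_succ_of_not_mem {t : ℕ} {x : Fin d → ℤ} (hx : x ∉ M.S (t + 1)) :
    M.η (t + 1) x = M.η t x
      + (1 / (2 * (d : ℝ))) * ∑ p : Fin d × Bool, (M.S (t + 1)).indicator (M.η t) (nb x p) := by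
  rw [M.evolve' t x, Set.indicator_of_mem (by exact hx : x ∈ (M.S (t+1))ᶜ)]

lemma eta_succ_of_mem {t : ℕ} {x : Fin d → ℤ} (hx : x ∈ M.S (t + 1)) :
    M.η (t + 1) x
      = (1 / (2 * (d : ℝ))) * ∑ p : Fin d × Bool, (M.S (t + 1)).indicator (M.η t) (nb x p) := by
  rw [M.evolve' t x, Set.indicator_of_notMem (by simpa using hx), zero_add]

lemma sum_ind_nonneg (t : ℕ) (x : Fin d → ℤ) :
    0 ≤ ∑ p : Fin d × Bool, (M.S (t + 1)).indicator (M.η t) (nb x p) :=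
  Finset.sum_nonneg fun p _ => M.ind_nonneg t (nb x p)

lemma support_finite (hh1 : h < 1) : ∀ t, {x | M.η t x ≠ h}.Finite := by
  intro t
  induction t with
  | zero =>
    refine Set.Finite.subset (Set.finite_singleton 0) (fun x hx => ?_)
    by_contra hx0
    exact hx (M.init_other x hx0)
  | succ t ih =>
    have hS : (M.S (t + 1)).Finite := ih.subset (fun z hz => by
      have h1 := M.S_subset t hz
      exact (lt_of_lt_of_le hh1 h1).ne')
    refine Set.Finite.subset
      (ih.union (Set.finite_iUnion (fun p : Fin d × Bool => hS.image (fun z => nb z p)))) ?_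
    intro x hx
    by_contra hx2
    simp only [Set.mem_union, Set.mem_iUnion, Set.mem_image, not_or, not_exists, not_and] at hx2
    obtain ⟨hx3, hx4⟩ := hx2
    have hxS : x ∉ M.S (t + 1) := fun hmem => hx3 ((lt_of_lt_of_le hh1 (M.S_subset t hmem)).ne')
    have hnb : ∀ p : Fin d × Bool, (M.S (t + 1)).indicator (M.η t) (nb x p) = 0 := by
      intro p
      refine Set.indicator_of_notMem (fun hmem => ?_) _
      exact hx4 (pinv p) (nb x p) hmem (nb_nb x p)
    have : M.η (t + 1) x = M.η t x := by
      rw [M.eta_succ_of_not_mem hxS]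
      simp [hnb]
    rw [Set.mem_setOf_eq, this] at hx
    exact hx (not_not.mp hx3)

lemma S_fin (hh1 : h < 1) : ∀ t, (M.S t).Finite := by
  intro t
  cases t with
  | zero => rw [M.S_zero]; exact Set.finite_empty
  | succ t =>
    exact (M.support_finite hh1 t).subset (fun z hz =>
      (lt_of_lt_of_le hh1 (M.S_subset t hz)).ne')

lemma sum_eta_step (hd : 1 ≤ d) (hh1 : h < 1) (F : Finset (Fin d → ℤ)) (t : ℕ)
    (hSF : ∀ z ∈ M.S (t + 1), z ∈ F)
    (hNF : ∀ z ∈ M.S (t + 1), ∀ p : Fin d × Bool, nb z p ∈ F) :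
    ∑ x ∈ F, M.η (t + 1) x = ∑ x ∈ F, M.η t x := by
  have hS : (M.S (t + 1)).Finite := M.S_fin hh1 (t + 1)
  set St := hS.toFinset with hStdef
  have hmemSt : ∀ z, z ∈ St ↔ z ∈ M.S (t + 1) := fun z => hS.mem_toFinset
  have hStF : St ⊆ F := fun z hz => hSF z ((hmemSt z).mp hz)
  -- sums of indicators over any superset of St equal the sum over St
  have sum_ind : ∀ (E : Finset (Fin d → ℤ)), St ⊆ E →
      ∑ z ∈ E, (M.S (t + 1)).indicator (M.η t) z = ∑ z ∈ St, M.η t z := by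
    intro E hE
    rw [← Finset.sum_subset hE (fun z _ hzn =>
      Set.indicator_of_notMem (fun hzS => hzn ((hmemSt z).mpr hzS)) _)]
    exact Finset.sum_congr rfl (fun z hz => Set.indicator_of_mem ((hmemSt z).mp hz) _)
  have key : ∀ p : Fin d × Bool,
      ∑ x ∈ F, (M.S (t + 1)).indicator (M.η t) (nb x p) = ∑ z ∈ St, M.η t z := by
    intro p
    have h1 : ∑ x ∈ F, (M.S (t + 1)).indicator (M.η t) (nb x p)
        = ∑ z ∈ F.image (fun x => nb x p), (M.S (t + 1)).indicator (M.η t) z := by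
      rw [Finset.sum_image (fun a _ b _ hab => nb_inj p hab)]
    have h2 : St ⊆ F.image (fun x => nb x p) := by
      intro z hz
      refine Finset.mem_image.mpr ⟨nb z (pinv p), hNF z ((hmemSt z).mp hz) (pinv p), ?_⟩
      exact nb_nb' z p
    rw [h1, sum_ind _ h2]
  have hcompl : ∑ x ∈ F, (M.S (t + 1))ᶜ.indicator (M.η t) x
      = ∑ x ∈ F, M.η t x - ∑ z ∈ St, M.η t z := by
    have : ∀ x, (M.S (t + 1))ᶜ.indicator (M.η t) x
        = M.η t x - (M.S (t + 1)).indicator (M.η t) x := by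
      intro x
      by_cases hx : x ∈ M.S (t + 1)
      · rw [Set.indicator_of_notMem (by simpa using hx), Set.indicator_of_mem hx]; ring
      · rw [Set.indicator_of_mem (by simpa using hx), Set.indicator_of_notMem hx]; ring
    simp only [this]
    rw [Finset.sum_sub_distrib, sum_ind F hStF]
  have hcard : ((Finset.univ : Finset (Fin d × Bool)).card : ℝ) = 2 * d := by
    rw [Finset.card_univ, Fintype.card_prod, Fintype.card_fin, Fintype.card_bool]
    push_cast; ring
  calc ∑ x ∈ F, M.η (t + 1) x
      = ∑ x ∈ F, ((M.S (t + 1))ᶜ.indicator (M.η t) x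
          + (1 / (2 * (d : ℝ))) * ∑ p : Fin d × Bool, (M.S (t + 1)).indicator (M.η t) (nb x p)) := by
        exact Finset.sum_congr rfl (fun x _ => M.evolve' t x)
    _ = (∑ x ∈ F, (M.S (t + 1))ᶜ.indicator (M.η t) x)
          + (1 / (2 * (d : ℝ))) * ∑ p : Fin d × Bool,
              ∑ x ∈ F, (M.S (t + 1)).indicator (M.η t) (nb x p) := by
        rw [Finset.sum_add_distrib, ← Finset.mul_sum, Finset.sum_comm]
    _ = (∑ x ∈ F, M.η t x - ∑ z ∈ St, M.η t z)
          + (1 / (2 * (d : ℝ))) * ((2 * (d : ℝ)) * ∑ z ∈ St, M.η t z) := by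
        rw [hcompl]
        congr 1
        rw [Finset.sum_congr rfl (fun p _ => key p), Finset.sum_const, nsmul_eq_mul, hcard]
    _ = ∑ x ∈ F, M.η t x := by
        have hd0 : (2 * (d : ℝ)) ≠ 0 := by
          have : (0:ℝ) < d := by exact_mod_cast hd
          positivity
        field_simp
        ring
lemma sum_eta_T (hd : 1 ≤ d) (hh1 : h < 1) (F : Finset (Fin d → ℤ)) (T : ℕ)
    (hSF : ∀ t, t < T → ∀ z ∈ M.S (t + 1), z ∈ F)
    (hNF : ∀ t, t < T → ∀ z ∈ M.S (t + 1), ∀ p : Fin d × Bool, nb z p ∈ F) :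
    ∑ x ∈ F, M.η T x = ∑ x ∈ F, M.η 0 x := by
  induction T with
  | zero => rfl
  | succ T ih =>
    rw [M.sum_eta_step hd hh1 F T (hSF T (Nat.lt_succ_self T)) (hNF T (Nat.lt_succ_self T))]
    exact ih (fun t ht => hSF t (ht.trans (Nat.lt_succ_self T)))
      (fun t ht => hNF t (ht.trans (Nat.lt_succ_self T)))

/-- receipts lemma: a site that does not split during `(s, T]` accumulates at least
`1/(2d)` for each direction in which some neighbor splits during `[s+1, T]`. -/
lemma recv (T : ℕ) (x : Fin d → ℤ) (s : ℕ) (hsT : s ≤ T)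
    (hns : ∀ u, s < u → u ≤ T → x ∉ M.S u) :
    M.η s x + (1 / (2 * (d : ℝ))) * ((Finset.univ.filter
        (fun p : Fin d × Bool => ∃ u, s + 1 ≤ u ∧ u ≤ T ∧ nb x p ∈ M.S u)).card) ≤ M.η T x := by
  induction T, hsT using Nat.le_induction with
  | base =>
    have : (Finset.univ.filter
        (fun p : Fin d × Bool => ∃ u, s + 1 ≤ u ∧ u ≤ s ∧ nb x p ∈ M.S u)) = ∅ := by
      refine Finset.filter_false_of_mem (fun p _ => ?_)
      rintro ⟨u, hu1, hu2, -⟩; omega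
    rw [this]; simp
  | succ T hsT ih =>
    have ihh := ih (fun u hu1 hu2 => hns u hu1 (hu2.trans (Nat.le_succ T)))
    set RT := Finset.univ.filter
        (fun p : Fin d × Bool => ∃ u, s + 1 ≤ u ∧ u ≤ T ∧ nb x p ∈ M.S u) with hRT
    set R' := Finset.univ.filter
        (fun p : Fin d × Bool => ∃ u, s + 1 ≤ u ∧ u ≤ T + 1 ∧ nb x p ∈ M.S u) with hR'
    set Dl := (Finset.univ.filter
        (fun p : Fin d × Bool => nb x p ∈ M.S (T + 1))) \ RT with hDl
    have hsub : R' ⊆ RT ∪ Dl := by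
      intro p hp
      obtain ⟨u, hu1, hu2, hu3⟩ := (Finset.mem_filter.mp hp).2
      by_cases hpRT : p ∈ RT
      · exact Finset.mem_union_left _ hpRT
      · rcases Nat.lt_succ_iff_lt_or_eq.mp (Nat.lt_succ_of_le hu2) with h' | h'
        · exact absurd (Finset.mem_filter.mpr ⟨Finset.mem_univ p, ⟨u, hu1, Nat.lt_succ_iff.mp h', hu3⟩⟩) hpRT
        · subst h'
          exact Finset.mem_union_right _ (Finset.mem_sdiff.mpr
            ⟨Finset.mem_filter.mpr ⟨Finset.mem_univ p, hu3⟩, hpRT⟩)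
    have hcard : (R'.card : ℝ) ≤ RT.card + Dl.card := by
      have := (Finset.card_le_card hsub).trans (Finset.card_union_le RT Dl)
      exact_mod_cast this
    have hxS : x ∉ M.S (T + 1) := hns (T + 1) (by omega) (le_refl _)
    have hge : (Dl.card : ℝ) ≤ ∑ p : Fin d × Bool, (M.S (T + 1)).indicator (M.η T) (nb x p) := by
      calc (Dl.card : ℝ) = ∑ p ∈ Dl, (1:ℝ) := by rw [Finset.sum_const, nsmul_eq_mul, mul_one]
        _ ≤ ∑ p ∈ Dl, (M.S (T + 1)).indicator (M.η T) (nb x p) := by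
            refine Finset.sum_le_sum (fun p hp => ?_)
            have := (Finset.mem_filter.mp (Finset.mem_sdiff.mp hp).1).2
            exact M.ind_one this
        _ ≤ ∑ p : Fin d × Bool, (M.S (T + 1)).indicator (M.η T) (nb x p) := by
            refine Finset.sum_le_sum_of_subset_of_nonneg (Finset.subset_univ Dl)
              (fun p _ _ => M.ind_nonneg T (nb x p))
    have hc : (0:ℝ) ≤ 1 / (2 * (d : ℝ)) := by positivity
    have hev := M.eta_succ_of_not_mem hxS
    have : M.η s x + (1 / (2 * (d : ℝ))) * R'.card
        ≤ (M.η s x + (1 / (2 * (d : ℝ))) * RT.card) + (1 / (2 * (d : ℝ))) * Dl.card := by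
      have := mul_le_mul_of_nonneg_left hcard hc
      rw [mul_add] at this
      linarith
    refine this.trans ?_
    rw [hev]
    have h2 := mul_le_mul_of_nonneg_left hge hc
    linarith

lemma at_split (t : ℕ) {x : Fin d → ℤ} (hx : x ∈ M.S (t + 1)) :
    (1 / (2 * (d : ℝ))) * ((Finset.univ.filter
        (fun p : Fin d × Bool => nb x p ∈ M.S (t + 1))).card) ≤ M.η (t + 1) x := by
  rw [M.eta_succ_of_mem hx]
  have hc : (0:ℝ) ≤ 1 / (2 * (d : ℝ)) := by positivity
  refine mul_le_mul_of_nonneg_left ?_ hc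
  calc ((Finset.univ.filter (fun p : Fin d × Bool => nb x p ∈ M.S (t + 1))).card : ℝ)
      = ∑ p ∈ Finset.univ.filter (fun p : Fin d × Bool => nb x p ∈ M.S (t + 1)), (1:ℝ) := by
        rw [Finset.sum_const, nsmul_eq_mul, mul_one]
    _ ≤ ∑ p ∈ Finset.univ.filter (fun p : Fin d × Bool => nb x p ∈ M.S (t + 1)),
          (M.S (t + 1)).indicator (M.η t) (nb x p) := by
        refine Finset.sum_le_sum (fun p hp => M.ind_one (Finset.mem_filter.mp hp).2)
    _ ≤ ∑ p : Fin d × Bool, (M.S (t + 1)).indicator (M.η t) (nb x p) :=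
        Finset.sum_le_sum_of_subset_of_nonneg (Finset.subset_univ _)
          (fun p _ _ => M.ind_nonneg t (nb x p))

lemma site_bound_split (T : ℕ) (x : Fin d → ℤ) (s : ℕ) (hs1 : 1 ≤ s) (hsT : s ≤ T)
    (hxS : x ∈ M.S s) (hlast : ∀ u, s < u → u ≤ T → x ∉ M.S u) :
    (1 / (2 * (d : ℝ))) * ((Finset.univ.filter
        (fun p : Fin d × Bool => ∃ u, s ≤ u ∧ u ≤ T ∧ nb x p ∈ M.S u)).card) ≤ M.η T x := by
  obtain ⟨t, rfl⟩ : ∃ t, s = t + 1 := ⟨s - 1, by omega⟩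
  have h1 := M.at_split t hxS
  have h2 := M.recv T x (t + 1) hsT hlast
  have hc : (0:ℝ) ≤ 1 / (2 * (d : ℝ)) := by positivity
  have hsub : (Finset.univ.filter
        (fun p : Fin d × Bool => ∃ u, t + 1 ≤ u ∧ u ≤ T ∧ nb x p ∈ M.S u))
      ⊆ (Finset.univ.filter (fun p : Fin d × Bool => nb x p ∈ M.S (t + 1)))
        ∪ (Finset.univ.filter
        (fun p : Fin d × Bool => ∃ u, t + 1 + 1 ≤ u ∧ u ≤ T ∧ nb x p ∈ M.S u)) := by
    intro p hp
    obtain ⟨u, hu1, hu2, hu3⟩ := (Finset.mem_filter.mp hp).2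
    rcases eq_or_lt_of_le hu1 with h' | h'
    · exact Finset.mem_union_left _ (Finset.mem_filter.mpr ⟨Finset.mem_univ p, h' ▸ hu3⟩)
    · exact Finset.mem_union_right _ (Finset.mem_filter.mpr ⟨Finset.mem_univ p, ⟨u, by omega, hu2, hu3⟩⟩)
  have hcard : ((Finset.univ.filter
        (fun p : Fin d × Bool => ∃ u, t + 1 ≤ u ∧ u ≤ T ∧ nb x p ∈ M.S u)).card : ℝ)
      ≤ ((Finset.univ.filter (fun p : Fin d × Bool => nb x p ∈ M.S (t + 1))).card : ℝ)
        + ((Finset.univ.filter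
        (fun p : Fin d × Bool => ∃ u, t + 1 + 1 ≤ u ∧ u ≤ T ∧ nb x p ∈ M.S u)).card : ℝ) := by
    have := (Finset.card_le_card hsub).trans (Finset.card_union_le _ _)
    exact_mod_cast this
  have := mul_le_mul_of_nonneg_left hcard hc
  rw [mul_add] at this
  linarith

lemma site_bound_nosplit (T : ℕ) (x : Fin d → ℤ)
    (hno : ∀ u, 1 ≤ u → u ≤ T → x ∉ M.S u) :
    M.η 0 x + (1 / (2 * (d : ℝ))) * ((Finset.univ.filter
        (fun p : Fin d × Bool => ∃ u, 1 ≤ u ∧ u ≤ T ∧ nb x p ∈ M.S u)).card) ≤ M.η T x := by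
  have := M.recv T x 0 (Nat.zero_le T) (fun u hu1 hu2 => hno u hu1 hu2)
  simpa using this

lemma pairing {d : ℕ} (A F : Finset (Fin d → ℤ)) (L : (Fin d → ℤ) → ℕ)
    (hAF : A ⊆ F) (hnbF : ∀ z ∈ A, ∀ p : Fin d × Bool, nb z p ∈ F) :
    d * 2 * A.card ≤ 2 * ∑ x ∈ F, (Finset.univ.filter
      (fun p : Fin d × Bool => nb x p ∈ A ∧ (x ∈ A → L x ≤ L (nb x p)))).card := by
  classical
  set g : (Fin d → ℤ) → (Fin d × Bool) → Prop := fun x p =>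
    nb x p ∈ A ∧ (x ∈ A → L x ≤ L (nb x p)) with hg
  set GP : Finset ((Fin d → ℤ) × (Fin d × Bool)) :=
    (F ×ˢ Finset.univ).filter (fun zq => g zq.1 zq.2) with hGP
  set φ : ((Fin d → ℤ) × (Fin d × Bool)) → ((Fin d → ℤ) × (Fin d × Bool)) :=
    fun yp => if g yp.1 yp.2 then yp else (nb yp.1 yp.2, pinv yp.2) with hφ
  have hmaps : ∀ yp ∈ A ×ˢ (Finset.univ : Finset (Fin d × Bool)), φ yp ∈ GP := by
    rintro ⟨y, p⟩ hyp
    have hyA : y ∈ A := (Finset.mem_product.mp hyp).1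
    by_cases hgy : g y p
    · simp only [hφ, if_pos hgy]
      exact Finset.mem_filter.mpr ⟨Finset.mem_product.mpr ⟨hAF hyA, Finset.mem_univ _⟩, hgy⟩
    · simp only [hφ, if_neg hgy]
      refine Finset.mem_filter.mpr ⟨Finset.mem_product.mpr ⟨hnbF y hyA p, Finset.mem_univ _⟩, ?_⟩
      have he : nb (nb y p) (pinv p) = y := nb_nb y p
      refine ⟨?_, fun hnbA => ?_⟩
      · rw [he]; exact hyA
      rw [he]
      have hnbA' : nb y p ∈ A := hnbA
      have h2 : ¬ (y ∈ A → L y ≤ L (nb y p)) := fun hcon => hgy ⟨hnbA', hcon⟩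
      have h3 : ¬ (L y ≤ L (nb y p)) := fun hc => h2 (fun _ => hc)
      exact le_of_lt (lt_of_not_ge h3)
  have hfib : ∀ zq ∈ GP, ((A ×ˢ (Finset.univ : Finset (Fin d × Bool))).filter
      (fun yp => φ yp = zq)).card ≤ 2 := by
    intro zq _
    have hsub2 : ((A ×ˢ (Finset.univ : Finset (Fin d × Bool))).filter (fun yp => φ yp = zq))
        ⊆ {zq, (nb zq.1 zq.2, pinv zq.2)} := by
      rintro ⟨y, p⟩ hyp
      have heq := (Finset.mem_filter.mp hyp).2
      by_cases hgy : g y p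
      · simp only [hφ, if_pos hgy] at heq
        exact Finset.mem_insert.mpr (Or.inl heq)
      · simp only [hφ, if_neg hgy] at heq
        refine Finset.mem_insert.mpr (Or.inr (Finset.mem_singleton.mpr ?_))
        have h1 : zq.1 = nb y p := by rw [← heq]
        have h2 : zq.2 = pinv p := by rw [← heq]
        have : nb zq.1 zq.2 = y := by rw [h1, h2, nb_nb]
        have hp2 : pinv zq.2 = p := by rw [h2, pinv_pinv]
        exact Prod.ext this.symm hp2.symm
    refine (Finset.card_le_card hsub2).trans ?_
    refine (Finset.card_insert_le _ _).trans ?_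
    simp
  have h1 : (A ×ˢ (Finset.univ : Finset (Fin d × Bool))).card ≤ 2 * GP.card :=
    Finset.card_le_mul_card_image_of_maps_to hmaps 2 hfib
  have h2 : (A ×ˢ (Finset.univ : Finset (Fin d × Bool))).card = A.card * (d * 2) := by
    rw [Finset.card_product, Finset.card_univ, Fintype.card_prod, Fintype.card_fin,
      Fintype.card_bool]
  have h3 : GP.card = ∑ x ∈ F, (Finset.univ.filter (fun p => g x p)).card := by
    rw [Finset.card_eq_sum_card_fiberwise (f := Prod.fst) (t := F)
      (fun zq hzq => (Finset.mem_product.mp (Finset.mem_filter.mp hzq).1).1)]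
    refine Finset.sum_congr rfl (fun x hx => ?_)
    have hset : GP.filter (fun zq => zq.1 = x)
        = (Finset.univ.filter (fun p => g x p)).image (fun p => (x, p)) := by
      ext ⟨a, b⟩
      simp only [hGP, Finset.mem_filter, Finset.mem_product, Finset.mem_image,
        Finset.mem_univ, true_and, and_true]
      constructor
      · rintro ⟨⟨-, hgab⟩, rfl⟩
        exact ⟨b, hgab, rfl⟩
      · rintro ⟨p, hp, hpe⟩
        injection hpe with hpe1 hpe2
        subst hpe1; subst hpe2
        exact ⟨⟨hx, hp⟩, rfl⟩
    rw [hset, Finset.card_image_of_injective _ (fun p q hpq => by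
      simpa using (Prod.mk.injEq x p x q).mp hpq |>.2)]
  have hgoal : d * 2 * A.card ≤ 2 * ∑ x ∈ F, (Finset.univ.filter (fun p => g x p)).card := by
    rw [← h3]
    calc d * 2 * A.card = A.card * (d * 2) := by ring
      _ = (A ×ˢ (Finset.univ : Finset (Fin d × Bool))).card := h2.symm
      _ ≤ 2 * GP.card := h1
  exact hgoal

theorem split_sites_bound (hd : 1 ≤ d) (hhp : max h 0 < 1 / 2) (hn : 0 ≤ n)
    (T : ℕ) (hA : (M.Tt T).Finite) :
    (hA.toFinset.card : ℝ) * (1 / 2 - max h 0) ≤ n := by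
  classical
  have hh1 : h < 1 := lt_of_le_of_lt (le_max_left h 0) (hhp.trans (by norm_num))
  have hdR : (0:ℝ) < d := by exact_mod_cast hd
  have hc0 : (0:ℝ) ≤ 1 / (2 * (d : ℝ)) := by positivity
  set A := hA.toFinset with hAdef
  have hmemA : ∀ z, z ∈ A ↔ ∃ u, 1 ≤ u ∧ u ≤ T ∧ z ∈ M.S u := by
    intro z
    rw [hAdef, Set.Finite.mem_toFinset]
    simp only [Tt, Set.mem_iUnion, Set.mem_Icc, exists_prop]
    constructor
    · rintro ⟨u, ⟨h1, h2⟩, h3⟩; exact ⟨u, h1, h2, h3⟩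
    · rintro ⟨u, h1, h2, h3⟩; exact ⟨u, ⟨h1, h2⟩, h3⟩
  set NA := A.biUnion (fun y => Finset.image (fun p : Fin d × Bool => nb y p) Finset.univ)
    with hNA
  set F := A ∪ NA with hF
  have hAF : A ⊆ F := Finset.subset_union_left
  have hnbF : ∀ z ∈ A, ∀ p : Fin d × Bool, nb z p ∈ F := fun z hz p =>
    Finset.mem_union_right _ (Finset.mem_biUnion.mpr
      ⟨z, hz, Finset.mem_image.mpr ⟨p, Finset.mem_univ p, rfl⟩⟩)
  have hSA : ∀ t, t < T → ∀ z ∈ M.S (t + 1), z ∈ A := fun t ht z hz =>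
    (hmemA z).mpr ⟨t + 1, by omega, by omega, hz⟩
  have hsum : ∑ x ∈ F, M.η T x = ∑ x ∈ F, M.η 0 x :=
    M.sum_eta_T hd hh1 F T (fun t ht z hz => hAF (hSA t ht z hz))
      (fun t ht z hz p => hnbF z (hSA t ht z hz) p)
  set Q : (Fin d → ℤ) → Finset ℕ := fun x => (Finset.Icc 1 T).filter (fun u => x ∈ M.S u)
    with hQ
  have hQA : ∀ x, x ∈ A ↔ (Q x).Nonempty := by
    intro x
    rw [hmemA]
    constructor
    · rintro ⟨u, h1, h2, h3⟩
      exact ⟨u, Finset.mem_filter.mpr ⟨Finset.mem_Icc.mpr ⟨h1, h2⟩, h3⟩⟩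
    · rintro ⟨u, hu⟩
      obtain ⟨h1, h2⟩ := Finset.mem_filter.mp hu
      obtain ⟨h3, h4⟩ := Finset.mem_Icc.mp h1
      exact ⟨u, h3, h4, h2⟩
  set L : (Fin d → ℤ) → ℕ := fun x => if hx : (Q x).Nonempty then (Q x).max' hx else 0
    with hL
  have hLmem : ∀ x ∈ A, L x ∈ Q x := by
    intro x hx
    have hne := (hQA x).mp hx
    simp only [hL, dif_pos hne]
    exact (Q x).max'_mem hne
  have hLS : ∀ x ∈ A, x ∈ M.S (L x) := fun x hx =>
    (Finset.mem_filter.mp (hLmem x hx)).2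
  have hL1 : ∀ x ∈ A, 1 ≤ L x ∧ L x ≤ T := fun x hx =>
    Finset.mem_Icc.mp (Finset.mem_filter.mp (hLmem x hx)).1
  have hLlast : ∀ x ∈ A, ∀ u, L x < u → u ≤ T → x ∉ M.S u := by
    intro x hx u hu1 hu2 huS
    have hne := (hQA x).mp hx
    have hmem : u ∈ Q x := Finset.mem_filter.mpr ⟨Finset.mem_Icc.mpr ⟨by omega, hu2⟩, huS⟩
    have hle := (Q x).le_max' u hmem
    simp only [hL, dif_pos hne] at hu1
    omega
  have hbound : ∀ x ∈ F, (1 / (2 * (d : ℝ))) * ((Finset.univ.filter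
      (fun p : Fin d × Bool => nb x p ∈ A ∧ (x ∈ A → L x ≤ L (nb x p)))).card)
      + (if x ∈ A then 0 else M.η 0 x) ≤ M.η T x := by
    intro x hxF
    by_cases hx : x ∈ A
    · rw [if_pos hx, add_zero]
      obtain ⟨hl1, hlT⟩ := hL1 x hx
      have hmain := M.site_bound_split T x (L x) hl1 hlT (hLS x hx) (hLlast x hx)
      refine le_trans ?_ hmain
      refine mul_le_mul_of_nonneg_left ?_ hc0
      have hsub : (Finset.univ.filter
          (fun p : Fin d × Bool => nb x p ∈ A ∧ (x ∈ A → L x ≤ L (nb x p))))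
          ⊆ (Finset.univ.filter
          (fun p : Fin d × Bool => ∃ u, L x ≤ u ∧ u ≤ T ∧ nb x p ∈ M.S u)) := by
        intro p hp
        obtain ⟨hnbA, himp⟩ := (Finset.mem_filter.mp hp).2
        exact Finset.mem_filter.mpr ⟨Finset.mem_univ _,
          ⟨L (nb x p), himp hx, (hL1 _ hnbA).2, hLS _ hnbA⟩⟩
      exact_mod_cast Finset.card_le_card hsub
    · rw [if_neg hx]
      have hno : ∀ u, 1 ≤ u → u ≤ T → x ∉ M.S u := fun u h1 h2 hS =>
        hx ((hmemA x).mpr ⟨u, h1, h2, hS⟩)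
      have hmain := M.site_bound_nosplit T x hno
      have hsub : (Finset.univ.filter
          (fun p : Fin d × Bool => nb x p ∈ A ∧ (x ∈ A → L x ≤ L (nb x p))))
          ⊆ (Finset.univ.filter
          (fun p : Fin d × Bool => ∃ u, 1 ≤ u ∧ u ≤ T ∧ nb x p ∈ M.S u)) := by
        intro p hp
        obtain ⟨hnbA, -⟩ := (Finset.mem_filter.mp hp).2
        exact Finset.mem_filter.mpr ⟨Finset.mem_univ _,
          ⟨L (nb x p), (hL1 _ hnbA).1, (hL1 _ hnbA).2, hLS _ hnbA⟩⟩
      have hcc : ((Finset.univ.filter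
          (fun p : Fin d × Bool => nb x p ∈ A ∧ (x ∈ A → L x ≤ L (nb x p)))).card : ℝ)
          ≤ ((Finset.univ.filter
          (fun p : Fin d × Bool => ∃ u, 1 ≤ u ∧ u ≤ T ∧ nb x p ∈ M.S u)).card : ℝ) := by
        exact_mod_cast Finset.card_le_card hsub
      have := mul_le_mul_of_nonneg_left hcc hc0
      linarith
  have hsplit : (1 / (2 * (d : ℝ))) * (∑ x ∈ F, (((Finset.univ.filter
      (fun p : Fin d × Bool => nb x p ∈ A ∧ (x ∈ A → L x ≤ L (nb x p)))).card : ℝ)))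
      + ∑ x ∈ F, (if x ∈ A then (0:ℝ) else M.η 0 x) ≤ ∑ x ∈ F, M.η T x := by
    rw [Finset.mul_sum, ← Finset.sum_add_distrib]
    exact Finset.sum_le_sum hbound
  have hos : ∑ x ∈ F, (if x ∈ A then (0:ℝ) else M.η 0 x) = ∑ x ∈ F \ A, M.η 0 x := by
    rw [← Finset.sum_sdiff hAF]
    have e1 : ∑ x ∈ F \ A, (if x ∈ A then (0:ℝ) else M.η 0 x) = ∑ x ∈ F \ A, M.η 0 x :=
      Finset.sum_congr rfl (fun x hx => if_neg (Finset.mem_sdiff.mp hx).2)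
    have e2 : ∑ x ∈ A, (if x ∈ A then (0:ℝ) else M.η 0 x) = 0 :=
      Finset.sum_eq_zero (fun x hx => if_pos hx)
    rw [e1, e2, add_zero]
  have hsdf : ∑ x ∈ F \ A, M.η 0 x + ∑ x ∈ A, M.η 0 x = ∑ x ∈ F, M.η 0 x :=
    Finset.sum_sdiff hAF
  have hkey : (1 / (2 * (d : ℝ))) * (∑ x ∈ F, (((Finset.univ.filter
      (fun p : Fin d × Bool => nb x p ∈ A ∧ (x ∈ A → L x ≤ L (nb x p)))).card : ℝ)))
      ≤ ∑ x ∈ A, M.η 0 x := by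
    rw [hos] at hsplit
    linarith
  have hinit : ∑ x ∈ A, M.η 0 x ≤ n + max h 0 * A.card := by
    have hpt : ∀ x ∈ A, M.η 0 x ≤ max h 0 + (if x = 0 then n else 0) := by
      intro x hx
      by_cases hx0 : x = 0
      · subst hx0
        rw [M.init_origin, if_pos rfl]
        have := le_max_right h 0
        linarith
      · rw [M.init_other x hx0, if_neg hx0, add_zero]
        exact le_max_left h 0
    calc ∑ x ∈ A, M.η 0 x ≤ ∑ x ∈ A, (max h 0 + (if x = 0 then n else 0)) :=
          Finset.sum_le_sum hpt
      _ = max h 0 * A.card + ∑ x ∈ A, (if x = 0 then n else 0) := by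
          rw [Finset.sum_add_distrib, Finset.sum_const, nsmul_eq_mul]
          ring
      _ ≤ max h 0 * A.card + n := by
          have heq : ∑ x ∈ A, (if x = 0 then n else 0)
              = if (0 : Fin d → ℤ) ∈ A then n else 0 := Finset.sum_ite_eq' A 0 (fun _ => n)
          rw [heq]
          split <;> linarith
      _ = n + max h 0 * A.card := by ring
  have hpair := pairing A F L hAF hnbF
  have hpairR : (d : ℝ) * A.card ≤ ∑ x ∈ F, (((Finset.univ.filter
      (fun p : Fin d × Bool => nb x p ∈ A ∧ (x ∈ A → L x ≤ L (nb x p)))).card : ℝ)) := by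
    have h2 : ((d * 2 * A.card : ℕ) : ℝ) ≤ ((2 * ∑ x ∈ F, (Finset.univ.filter
        (fun p : Fin d × Bool => nb x p ∈ A ∧ (x ∈ A → L x ≤ L (nb x p)))).card : ℕ) : ℝ) := by
      exact_mod_cast hpair
    push_cast at h2
    linarith
  have hhalf : (A.card : ℝ) / 2 ≤ (1 / (2 * (d : ℝ))) * (∑ x ∈ F, (((Finset.univ.filter
      (fun p : Fin d × Bool => nb x p ∈ A ∧ (x ∈ A → L x ≤ L (nb x p)))).card : ℝ))) := by
    have := mul_le_mul_of_nonneg_left hpairR hc0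
    have heq : (1 / (2 * (d : ℝ))) * ((d : ℝ) * A.card) = (A.card : ℝ) / 2 := by
      rw [div_mul_eq_mul_div, one_mul, mul_comm (2:ℝ), ← div_div, mul_div_cancel_left₀ _ hdR.ne']
    linarith
  have hfin : (A.card : ℝ) / 2 ≤ n + max h 0 * A.card := by linarith
  nlinarith [hfin]

lemma splits_infinite_nb (hd : 1 ≤ d) (hV : M.Valid) (x : Fin d → ℤ)
    (hx : {t | x ∈ M.S t}.Infinite) (q : Fin d × Bool) :
    {t | nb x q ∈ M.S t}.Infinite := by
  set y := nb x q with hy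
  by_contra hfin
  rw [Set.not_infinite] at hfin
  obtain ⟨b, hb⟩ := hfin.bddAbove
  have hyx : nb y (pinv q) = x := nb_nb x q
  have hc0 : (0:ℝ) ≤ 1 / (2 * (d : ℝ)) := by
    have : (0:ℝ) < d := by exact_mod_cast hd
    positivity
  have mono : ∀ t₂, b ≤ t₂ → M.η b y + (1 / (2 * (d : ℝ)))
      * (((Finset.Ioc b t₂).filter (fun u => x ∈ M.S u)).card) ≤ M.η t₂ y := by
    intro t₂ ht
    induction t₂, ht using Nat.le_induction with
    | base => simp
    | succ t ht ih =>
      have hyS : y ∉ M.S (t + 1) := fun hmem => by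
        have := hb hmem
        omega
      have hterm : (if x ∈ M.S (t + 1) then (1:ℝ) else 0)
          ≤ ∑ p : Fin d × Bool, (M.S (t + 1)).indicator (M.η t) (nb y p) := by
        by_cases hxS : x ∈ M.S (t + 1)
        · rw [if_pos hxS]
          calc (1:ℝ) ≤ (M.S (t + 1)).indicator (M.η t) (nb y (pinv q)) := by
                rw [hyx]; exact M.ind_one hxS
            _ ≤ ∑ p : Fin d × Bool, (M.S (t + 1)).indicator (M.η t) (nb y p) :=
                Finset.single_le_sum (fun p _ => M.ind_nonneg t (nb y p)) (Finset.mem_univ _)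
        · rw [if_neg hxS]
          exact M.sum_ind_nonneg t y
      have hcardle : (((Finset.Ioc b (t + 1)).filter (fun u => x ∈ M.S u)).card : ℝ)
          ≤ (((Finset.Ioc b t).filter (fun u => x ∈ M.S u)).card : ℝ)
            + (if x ∈ M.S (t + 1) then (1:ℝ) else 0) := by
        have hss : (Finset.Ioc b (t + 1)).filter (fun u => x ∈ M.S u)
            ⊆ ((Finset.Ioc b t).filter (fun u => x ∈ M.S u))
              ∪ (if x ∈ M.S (t + 1) then {t + 1} else ∅) := by
          intro u hu
          obtain ⟨hu1, hu2⟩ := Finset.mem_filter.mp hu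
          obtain ⟨hu3, hu4⟩ := Finset.mem_Ioc.mp hu1
          rcases Nat.lt_succ_iff_lt_or_eq.mp (Nat.lt_succ_of_le hu4) with h' | h'
          · exact Finset.mem_union_left _ (Finset.mem_filter.mpr
              ⟨Finset.mem_Ioc.mpr ⟨hu3, Nat.lt_succ_iff.mp h'⟩, hu2⟩)
          · subst h'
            refine Finset.mem_union_right _ ?_
            rw [if_pos hu2]
            exact Finset.mem_singleton_self _
        have h5 := (Finset.card_le_card hss).trans (Finset.card_union_le _ _)
        have h6 : ((if x ∈ M.S (t + 1) then ({t + 1} : Finset ℕ) else ∅)).card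
            ≤ (if x ∈ M.S (t + 1) then (1:ℕ) else 0) := by
          split <;> simp
        have h7 : (((Finset.Ioc b (t + 1)).filter (fun u => x ∈ M.S u)).card : ℕ)
            ≤ ((Finset.Ioc b t).filter (fun u => x ∈ M.S u)).card
              + (if x ∈ M.S (t + 1) then (1:ℕ) else 0) := by omega
        have h8 : (((if x ∈ M.S (t + 1) then (1:ℕ) else 0) : ℕ) : ℝ)
            = (if x ∈ M.S (t + 1) then (1:ℝ) else 0) := by split <;> simp
        calc (((Finset.Ioc b (t + 1)).filter (fun u => x ∈ M.S u)).card : ℝ)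
            ≤ ((((Finset.Ioc b t).filter (fun u => x ∈ M.S u)).card
              + (if x ∈ M.S (t + 1) then (1:ℕ) else 0) : ℕ) : ℝ) := by exact_mod_cast h7
          _ = _ := by push_cast [h8]; ring
      rw [M.eta_succ_of_not_mem hyS]
      have h9 := mul_le_mul_of_nonneg_left hterm hc0
      have h10 := mul_le_mul_of_nonneg_left hcardle hc0
      rw [mul_add] at h10
      linarith
  obtain ⟨k, hk⟩ := exists_nat_ge (2 * (d : ℝ) * (1 - M.η b y))
  have hI : ({t | x ∈ M.S t} \ Set.Iic b).Infinite := hx.diff (Set.finite_Iic b)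
  obtain ⟨s, hsub, hcard⟩ := hI.exists_subset_card_eq (k + 1)
  have hne : s.Nonempty := Finset.card_pos.mp (by omega)
  set t₂ := s.max' hne with ht₂
  have ht₂b : b < t₂ := by
    obtain ⟨u, hu⟩ := hne
    have hu2 := hsub hu
    have : b < u := by
      simp only [Set.mem_diff, Set.mem_Iic, not_le] at hu2
      exact hu2.2
    exact lt_of_lt_of_le this (s.le_max' u hu)
  have hss : s ⊆ (Finset.Ioc b t₂).filter (fun u => x ∈ M.S u) := by
    intro u hu
    have hu2 := hsub hu
    simp only [Set.mem_diff, Set.mem_setOf_eq, Set.mem_Iic, not_le] at hu2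
    exact Finset.mem_filter.mpr ⟨Finset.mem_Ioc.mpr ⟨hu2.2, s.le_max' u hu⟩, hu2.1⟩
  have hcard2 : (k : ℝ) ≤ (((Finset.Ioc b t₂).filter (fun u => x ∈ M.S u)).card : ℝ) := by
    have := Finset.card_le_card hss
    rw [hcard] at this
    exact_mod_cast by omega
  have hη : (1:ℝ) ≤ M.η t₂ y := by
    have hm := mono t₂ (le_of_lt ht₂b)
    have hdpos : (0:ℝ) < 2 * (d : ℝ) := by
      have : (0:ℝ) < d := by exact_mod_cast hd
      linarith
    have h11 : (1 / (2 * (d : ℝ))) * (2 * (d : ℝ) * (1 - M.η b y))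
        ≤ (1 / (2 * (d : ℝ))) * (((Finset.Ioc b t₂).filter (fun u => x ∈ M.S u)).card : ℝ) :=
      mul_le_mul_of_nonneg_left (le_trans hk hcard2) hc0
    have h12 : (1 / (2 * (d : ℝ))) * (2 * (d : ℝ) * (1 - M.η b y)) = 1 - M.η b y := by
      field_simp
    linarith
  obtain ⟨t₀, ht₀, hS⟩ := hV.2 t₂ y hη
  have : t₂ + t₀ ≤ b := hb hS
  omega

lemma all_splits_infinite (hd : 1 ≤ d) (hV : M.Valid) (x₀ : Fin d → ℤ)
    (hx₀ : {t | x₀ ∈ M.S t}.Infinite) (z : Fin d → ℤ) :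
    {t | z ∈ M.S t}.Infinite := by
  suffices H : ∀ m : ℕ, ∀ z : Fin d → ℤ, (∑ i, (z i - x₀ i).natAbs) = m →
      {t | z ∈ M.S t}.Infinite from H _ z rfl
  intro m
  induction m using Nat.strong_induction_on with
  | _ m ih =>
    intro z hz
    rcases Nat.eq_zero_or_pos m with h0 | hpos
    · have hzx : z = x₀ := by
        funext i
        have : (z i - x₀ i).natAbs = 0 := by
          subst h0
          exact Finset.sum_eq_zero_iff.mp hz i (Finset.mem_univ i)
        have : z i - x₀ i = 0 := by omega
        linarith [this]
      rw [hzx]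
      exact hx₀
    · have hex : ∃ i, z i ≠ x₀ i := by
        by_contra hcon
        push_neg at hcon
        have : (∑ i, (z i - x₀ i).natAbs) = 0 :=
          Finset.sum_eq_zero (fun i _ => by rw [hcon i]; simp)
        omega
      obtain ⟨i, hi⟩ := hex
      have hδ : z i - x₀ i ≠ 0 := sub_ne_zero.mpr hi
      set bb : Bool := decide (0 < z i - x₀ i) with hbb
      set z' : Fin d → ℤ := Function.update z i (z i - dirz bb) with hz'
      have hz'z : nb z' (i, bb) = z := by
        simp only [hz', nb, nbr, Function.update_idem, Function.update_self]
        rw [sub_add_cancel, Function.update_eq_self]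
      have habs : (z i - dirz bb - x₀ i).natAbs = (z i - x₀ i).natAbs - 1
          ∧ 1 ≤ (z i - x₀ i).natAbs := by
        rcases lt_or_gt_of_ne hδ with hneg | hpos'
        · have : bb = false := by
            rw [hbb]; simp; omega
          rw [this]
          simp only [dirz, Bool.false_eq_true, if_false]
          omega
        · have : bb = true := by
            rw [hbb]; simp; omega
          rw [this]
          simp only [dirz, if_true]
          omega
      have hsum' : (∑ j, (z' j - x₀ j).natAbs) = m - 1 := by
        have hsplit1 : (∑ j, (z' j - x₀ j).natAbs)
            = (z' i - x₀ i).natAbs + ∑ j ∈ Finset.univ.erase i, (z' j - x₀ j).natAbs := by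
          rw [← Finset.add_sum_erase _ _ (Finset.mem_univ i)]
        have hsplit2 : (∑ j, (z j - x₀ j).natAbs)
            = (z i - x₀ i).natAbs + ∑ j ∈ Finset.univ.erase i, (z j - x₀ j).natAbs := by
          rw [← Finset.add_sum_erase _ _ (Finset.mem_univ i)]
        have hco : ∑ j ∈ Finset.univ.erase i, (z' j - x₀ j).natAbs
            = ∑ j ∈ Finset.univ.erase i, (z j - x₀ j).natAbs := by
          refine Finset.sum_congr rfl (fun j hj => ?_)
          have : z' j = z j := Function.update_of_ne (Finset.ne_of_mem_erase hj) _ _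
          rw [this]
        have hzi' : z' i = z i - dirz bb := Function.update_self i _ z
        rw [hsplit1, hco, hzi', habs.1]
        rw [hsplit2] at hz
        omega
      have hlt : m - 1 < m := by omega
      have hinf' := ih (m - 1) hlt z' hsum'
      have := M.splits_infinite_nb hd hV z' hinf' (i, bb)
      rwa [hz'z] at this

end SplittingModel

/-- If `h < 1/2` then the background `h` is robust for the splitting model on `ℤ^d`:
for every initial mass `n ≥ 0` and every valid splitting order, the configuration
`η_n^h` stabilizes. -/
theorem robust_background {d : ℕ} (hd : 1 ≤ d) {h : ℝ} (hh : h < 1 / 2) :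
    ∀ n : ℝ, 0 ≤ n → ∀ M : SplittingModel d n h, M.Valid → M.Stabilizes := by
  intro n hn M hV
  by_contra hstab
  simp only [SplittingModel.Stabilizes, not_forall] at hstab
  obtain ⟨x₀, hx₀⟩ := hstab
  have hx₀' : {t | x₀ ∈ M.S t}.Infinite := hx₀
  have hall := fun z => M.all_splits_infinite hd hV x₀ hx₀' z
  have hhp : max h 0 < 1 / 2 := max_lt hh (by norm_num)
  have hh1 : h < 1 := lt_of_le_of_lt (le_max_left h 0) (hhp.trans (by norm_num))
  have hpos : (0:ℝ) < 1 / 2 - max h 0 := by linarith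
  obtain ⟨N, hN⟩ := exists_nat_gt (n / (1 / 2 - max h 0))
  set e : ℕ → (Fin d → ℤ) := fun m => fun j : Fin d => if (j : ℕ) = 0 then (m : ℤ) else 0
    with he
  have hinj : Function.Injective e := by
    intro m₁ m₂ hm
    have h2 := congrFun hm ⟨0, hd⟩
    simp only [he, if_pos rfl] at h2
    exact_mod_cast h2
  set W := (Finset.range N).image e with hW
  have hWcard : W.card = N := by
    rw [hW, Finset.card_image_of_injective _ hinj, Finset.card_range]
  have hex : ∀ w : Fin d → ℤ, ∃ tw : ℕ, 1 ≤ tw ∧ w ∈ M.S tw := by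
    intro w
    obtain ⟨u, hu, hu0⟩ := (hall w).exists_gt 0
    exact ⟨u, hu0, hu⟩
  choose tw htw1 htwS using hex
  set T := W.sup tw with hT
  have hTt : (M.Tt T).Finite :=
    Set.Finite.biUnion (Set.finite_Icc 1 T) (fun u _ => M.S_fin hh1 u)
  have hsubW : W ⊆ hTt.toFinset := by
    intro w hw
    rw [Set.Finite.mem_toFinset]
    simp only [SplittingModel.Tt, Set.mem_iUnion, Set.mem_Icc, exists_prop]
    exact ⟨tw w, ⟨htw1 w, Finset.le_sup hw⟩, htwS w⟩
  have hcardW : (N : ℝ) ≤ (hTt.toFinset.card : ℝ) := by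
    have h3 := Finset.card_le_card hsubW
    rw [hWcard] at h3
    exact_mod_cast h3
  have hbd := M.split_sites_bound hd hhp hn T hTt
  have h1 : (N : ℝ) * (1 / 2 - max h 0) ≤ n :=
    le_trans (mul_le_mul_of_nonneg_right hcardW (le_of_lt hpos)) hbd
  have h2 : n < (N : ℝ) * (1 / 2 - max h 0) := by
    rw [div_lt_iff₀ hpos] at hN
    linarith
  linarith
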